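/- Let K ⊆ ℝⁿ be a nonempty compact convex set, a ∈ ℤⁿ, and suppose h_K(a) ∈ ℤ (so the face F = F_K(a) is nonempty). If L is a list of integer vectors with CG(F, L) = ∅, then h_{CG(K, L')}(a) < h_K(a) for the lifted list L' obtained from L via the sequential lifting lemma; consequently, applying one more CG cut induced by a to CG(K, L') yields a set on which the maximum of a·x is at most h_K(a) − 1. -/

import Mathlib

/-- The CG cut of `S` induced by `w`. -/
noncomputable def cgCut {n : ℕ} (S : Set (Fin n → ℝ)) (w : Fin n → ℝ) :
    Set (Fin n → ℝ) :=
  S ∩ {x | ∑ j, w j * x j ≤ (⌊sSup ((fun x => ∑ j, w j * x j) '' S)⌋ : ℝ)}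

/-- Sequential application of CG cuts, left to right. -/
noncomputable def cgList {n : ℕ} (S : Set (Fin n → ℝ)) (L : List (Fin n → ℝ)) :
    Set (Fin n → ℝ) :=
  L.foldl cgCut S

namespace CGAux

variable {n : ℕ}

/-- The linear functional `x ↦ ∑ j, w j * x j`. -/
def lin (w : Fin n → ℝ) : (Fin n → ℝ) → ℝ := fun x => ∑ j, w j * x j

lemma lin_cont (w : Fin n → ℝ) : Continuous (lin w) := by
  unfold lin
  exact continuous_finset_sum _ fun j _ => continuous_const.mul (continuous_apply j)

lemma lin_add_smul (w a : Fin n → ℝ) (c : ℝ) (x : Fin n → ℝ) :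
    lin (w + c • a) x = lin w x + c * lin a x := by
  unfold lin
  simp [add_mul, mul_assoc, Finset.sum_add_distrib, Finset.mul_sum]

lemma cgCut_eq (S : Set (Fin n → ℝ)) (w : Fin n → ℝ) :
    cgCut S w = S ∩ {x | lin w x ≤ (⌊sSup (lin w '' S)⌋ : ℝ)} := rfl

lemma cgCut_subset (S : Set (Fin n → ℝ)) (w : Fin n → ℝ) : cgCut S w ⊆ S :=
  Set.inter_subset_left

lemma cgList_cons (S : Set (Fin n → ℝ)) (w : Fin n → ℝ) (L : List (Fin n → ℝ)) :
    cgList S (w :: L) = cgList (cgCut S w) L := rfl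

lemma cgList_subset (L : List (Fin n → ℝ)) (S : Set (Fin n → ℝ)) : cgList S L ⊆ S := by
  induction L generalizing S with
  | nil => exact le_refl _
  | cons w rest ih =>
      rw [cgList_cons]
      exact (ih (cgCut S w)).trans (cgCut_subset S w)

lemma isCompact_cgCut {S : Set (Fin n → ℝ)} (hS : IsCompact S) (w : Fin n → ℝ) :
    IsCompact (cgCut S w) :=
  hS.inter_right (isClosed_le (lin_cont w) continuous_const)

lemma isCompact_cgList (L : List (Fin n → ℝ)) {S : Set (Fin n → ℝ)} (hS : IsCompact S) :
    IsCompact (cgList S L) := by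
  induction L generalizing S with
  | nil => exact hS
  | cons w rest ih => exact ih (isCompact_cgCut hS w)

lemma cgCut_mono {S S' : Set (Fin n → ℝ)} (hS : IsCompact S) (h : S' ⊆ S)
    (w : Fin n → ℝ) : cgCut S' w ⊆ cgCut S w := by
  rintro x ⟨hx, hle⟩
  have hle' : lin w x ≤ (⌊sSup (lin w '' S')⌋ : ℝ) := hle
  have hsup : sSup (lin w '' S') ≤ sSup (lin w '' S) :=
    csSup_le_csSup ((hS.image (lin_cont w)).bddAbove) ⟨lin w x, ⟨x, hx, rfl⟩⟩
      (Set.image_mono h)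
  have hfl : (⌊sSup (lin w '' S')⌋ : ℝ) ≤ (⌊sSup (lin w '' S)⌋ : ℝ) := by
    exact_mod_cast Int.floor_le_floor hsup
  exact ⟨h hx, le_trans hle' hfl⟩

lemma cgList_mono (L : List (Fin n → ℝ)) {S S' : Set (Fin n → ℝ)} (hS : IsCompact S)
    (h : S' ⊆ S) : cgList S' L ⊆ cgList S L := by
  induction L generalizing S S' with
  | nil => exact h
  | cons w rest ih =>
      rw [cgList_cons, cgList_cons]
      exact ih (isCompact_cgCut hS w) (cgCut_mono hS h w)

/-- Analytic core: for `N` large the support value of the lifted functional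
does not exceed `h_F(w) + ε + N z`. -/
lemma key {K : Set (Fin n → ℝ)} (hK : IsCompact K) (a w : Fin n → ℝ) (z : ℝ)
    (hub : ∀ x ∈ K, lin a x ≤ z)
    (hF : (K ∩ {x | lin a x = z}).Nonempty) {ε : ℝ} (hε : 0 < ε) :
    ∃ N : ℕ, ∀ x ∈ K, lin w x + N * (lin a x - z) ≤
      sSup (lin w '' (K ∩ {x | lin a x = z})) + ε := by
  set F := K ∩ {x | lin a x = z} with hFdef
  set M := sSup (lin w '' F) with hMdef
  by_contra hcon
  push_neg at hcon
  choose xs hxs hlt using hcon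
  -- bound lin w on K
  have hbddK : BddAbove (lin w '' K) := (hK.image (lin_cont w)).bddAbove
  obtain ⟨C, hC⟩ := hbddK
  have hCle : ∀ x ∈ K, lin w x ≤ C := fun x hx => hC ⟨x, hx, rfl⟩
  -- each N * (lin a (xs N) - z) ≤ 0
  have hnonpos : ∀ N : ℕ, (N : ℝ) * (lin a (xs N) - z) ≤ 0 := fun N =>
    mul_nonpos_of_nonneg_of_nonpos (Nat.cast_nonneg N) (by linarith [hub (xs N) (hxs N)])
  have hwlb : ∀ N : ℕ, M + ε < lin w (xs N) := fun N => by
    have := hlt N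
    nlinarith [hnonpos N]
  have halb : ∀ N : ℕ, 1 ≤ N → z + (M + ε - C) / N ≤ lin a (xs N) := by
    intro N hN
    have hNpos : (0 : ℝ) < N := by exact_mod_cast hN
    have h1 : M + ε - C < (N : ℝ) * (lin a (xs N) - z) := by
      have := hlt N
      have := hCle (xs N) (hxs N)
      linarith
    have := (div_lt_iff₀' hNpos).mpr h1
    linarith [this]
  obtain ⟨x, hxK, ψ, hψ, htend⟩ := hK.tendsto_subseq hxs
  have htendw : Filter.Tendsto (fun k => lin w (xs (ψ k))) Filter.atTop (nhds (lin w x)) :=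
    ((lin_cont w).continuousAt.tendsto.comp htend)
  have htenda : Filter.Tendsto (fun k => lin a (xs (ψ k))) Filter.atTop (nhds (lin a x)) :=
    ((lin_cont a).continuousAt.tendsto.comp htend)
  -- lin a x = z
  have hψatTop : Filter.Tendsto ψ Filter.atTop Filter.atTop := hψ.tendsto_atTop
  have hdiv : Filter.Tendsto (fun k => z + (M + ε - C) / (ψ k : ℝ)) Filter.atTop
      (nhds (z + 0)) := by
    exact Filter.Tendsto.const_add z
      ((tendsto_const_div_atTop_nhds_zero_nat (M + ε - C)).comp hψatTop)
  have haz : lin a x = z := by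
    have hle : lin a x ≤ z :=
      le_of_tendsto htenda (Filter.Eventually.of_forall fun k => hub _ (hxs _))
    have hge : z ≤ lin a x := by
      rw [← add_zero z]
      refine le_of_tendsto_of_tendsto hdiv htenda ?_
      filter_upwards [Filter.eventually_ge_atTop 1] with k hk
      exact halb (ψ k) (le_trans hk (hψ.le_apply))
    linarith
  have hxF : x ∈ F := ⟨hxK, haz⟩
  have hwle : lin w x ≤ M := by
    refine le_csSup ?_ ⟨x, hxF, rfl⟩
    exact ((hK.inter_right (isClosed_eq (lin_cont a) continuous_const)).image
      (lin_cont w)).bddAbove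
  have hwge : M + ε ≤ lin w x :=
    ge_of_tendsto htendw (Filter.Eventually.of_forall fun k => (hwlb (ψ k)).le)
  linarith

/-- Floor form of the lifting bound. -/
lemma key2 {K : Set (Fin n → ℝ)} (hK : IsCompact K) (a w : Fin n → ℝ) (z : ℤ)
    (hub : ∀ x ∈ K, lin a x ≤ (z : ℝ))
    (hF : (K ∩ {x | lin a x = (z : ℝ)}).Nonempty) :
    ∃ N : ℕ, (⌊sSup (lin (w + (N : ℝ) • a) '' K)⌋ : ℝ) ≤
      (⌊sSup (lin w '' (K ∩ {x | lin a x = (z : ℝ)}))⌋ : ℝ) + N * z := by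
  set F := K ∩ {x | lin a x = (z : ℝ)} with hFdef
  set M := sSup (lin w '' F) with hMdef
  have hMlt : M < ⌊M⌋ + 1 := Int.lt_floor_add_one M
  have hε : (0 : ℝ) < ((⌊M⌋ : ℝ) + 1 - M) / 2 := by linarith
  obtain ⟨N, hN⟩ := key hK a w (z : ℝ) hub hF hε
  refine ⟨N, ?_⟩
  have hKne : K.Nonempty := ⟨hF.choose, hF.choose_spec.1⟩
  have hsup : sSup (lin (w + (N : ℝ) • a) '' K) ≤
      M + ((⌊M⌋ : ℝ) + 1 - M) / 2 + N * z := by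
    refine csSup_le (hKne.image _) ?_
    rintro y ⟨x, hx, rfl⟩
    rw [lin_add_smul]
    have := hN x hx
    nlinarith
  have hlt : sSup (lin (w + (N : ℝ) • a) '' K) < ((⌊M⌋ + N * z + 1 : ℤ) : ℝ) := by
    push_cast
    linarith
  have := Int.floor_lt.mpr hlt
  have hle : ⌊sSup (lin (w + (N : ℝ) • a) '' K)⌋ ≤ ⌊M⌋ + N * z := by omega
  exact_mod_cast hle

/-- Main induction: sequential lifting. -/
lemma main (a : Fin n → ℝ) (z : ℤ) (L : List (Fin n → ℤ)) :
    ∀ K : Set (Fin n → ℝ), IsCompact K → (∀ x ∈ K, lin a x ≤ (z : ℝ)) →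
    cgList (K ∩ {x | lin a x = (z : ℝ)}) (L.map fun w => fun j => ((w j : ℝ))) = ∅ →
    ∃ ns : Fin L.length → ℕ,
      cgList K (List.ofFn fun i => (fun j => ((L.get i) j : ℝ)) + (ns i : ℝ) • a) ∩
        {x | lin a x = (z : ℝ)} = ∅ := by
  induction L with
  | nil =>
      intro K hK hub hL
      refine ⟨Fin.elim0, ?_⟩
      simpa [cgList, List.ofFn_zero] using hL
  | cons w rest ih =>
      intro K hK hub hL
      set F := K ∩ {x | lin a x = (z : ℝ)} with hFdef
      by_cases hF : F.Nonempty
      · set wR : Fin n → ℝ := fun j => ((w j : ℝ)) with hwR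
        obtain ⟨N, hN⟩ := key2 hK a wR z hub hF
        set K₁ := cgCut K (wR + (N : ℝ) • a) with hK₁def
        have hK₁c : IsCompact K₁ := isCompact_cgCut hK _
        have hub₁ : ∀ x ∈ K₁, lin a x ≤ (z : ℝ) := fun x hx => hub x (cgCut_subset _ _ hx)
        have hFc : IsCompact F := hK.inter_right (isClosed_eq (lin_cont a) continuous_const)
        have hsub : K₁ ∩ {x | lin a x = (z : ℝ)} ⊆ cgCut F wR := by
          rintro x ⟨⟨hxK, hxcut⟩, hxf⟩
          refine ⟨⟨hxK, hxf⟩, ?_⟩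
          have h1 : lin (wR + (N : ℝ) • a) x ≤
              (⌊sSup (lin (wR + (N : ℝ) • a) '' K)⌋ : ℝ) := hxcut
          rw [lin_add_smul] at h1
          have hxfz : lin a x = (z : ℝ) := hxf
          rw [hxfz] at h1
          show lin wR x ≤ (⌊sSup (lin wR '' F)⌋ : ℝ)
          have := hN
          push_cast at this h1 ⊢
          linarith
        have hLrest : cgList (cgCut F wR) (rest.map fun w => fun j => ((w j : ℝ))) = ∅ := by
          simpa [cgList] using hL
        have h₁ : cgList (K₁ ∩ {x | lin a x = (z : ℝ)})
            (rest.map fun w => fun j => ((w j : ℝ))) = ∅ := by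
          have := cgList_mono (rest.map fun w => fun j => ((w j : ℝ)))
            (isCompact_cgCut hFc wR) hsub
          rw [hLrest] at this
          exact Set.eq_empty_iff_forall_notMem.mpr fun x hx => (this hx).elim
        obtain ⟨ns', hns'⟩ := ih K₁ hK₁c hub₁ h₁
        refine ⟨Fin.cases N ns', ?_⟩
        have hlist : (List.ofFn fun i : Fin (rest.length + 1) =>
            (fun j => (((w :: rest).get i) j : ℝ)) + ((Fin.cases N ns' i : ℕ) : ℝ) • a) =
            (wR + (N : ℝ) • a) ::
              (List.ofFn fun i : Fin rest.length =>
                (fun j => ((rest.get i) j : ℝ)) + ((ns' i : ℕ) : ℝ) • a) := by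
          rw [List.ofFn_succ]
          rfl
        show cgList K (List.ofFn fun i : Fin (rest.length + 1) =>
            (fun j => (((w :: rest).get i) j : ℝ)) + ((Fin.cases N ns' i : ℕ) : ℝ) • a) ∩
            {x | lin a x = (z : ℝ)} = ∅
        rw [hlist, cgList_cons]
        exact hns'
      · refine ⟨fun _ => 0, ?_⟩
        have hsub : cgList K (List.ofFn fun i =>
            (fun j => (((w :: rest).get i) j : ℝ)) + ((0 : ℕ) : ℝ) • a) ⊆ K :=
          cgList_subset _ _
        rw [Set.not_nonempty_iff_eq_empty] at hF
        refine Set.eq_empty_iff_forall_notMem.mpr fun x hx => ?_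
        have : x ∈ F := ⟨hsub hx.1, hx.2⟩
        rw [hF] at this
        exact this

end CGAux

/-- If a list `L` of CG cuts empties the face `F = F_K(a)` (where
`h_K(a) = z ∈ ℤ`), then the lifted list `L'` (with elements `a_i + n_i·a`,
`n_i ∈ ℕ`) empties the face of `K`, forces `a·x < h_K(a)` on `CG(K, L')`, and
one further CG cut induced by `a` brings the maximum of `a·x` down to at most
`h_K(a) − 1`. -/
theorem stmt16 (n : ℕ) (K : Set (Fin n → ℝ)) (hne : K.Nonempty)
    (hK : IsCompact K) (hconv : Convex ℝ K) (a : Fin n → ℤ) (z : ℤ)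
    (hz : sSup ((fun x => ∑ j, (a j : ℝ) * x j) '' K) = (z : ℝ))
    (L : List (Fin n → ℤ))
    (hL : cgList (K ∩ {x | ∑ j, (a j : ℝ) * x j = (z : ℝ)})
      (L.map fun w => fun j => ((w j : ℝ))) = ∅) :
    ∃ ns : Fin L.length → ℕ,
      (cgList K (List.ofFn fun i => fun j => ((L.get i) j : ℝ) + (ns i : ℝ) * (a j : ℝ)) ∩
          {x | ∑ j, (a j : ℝ) * x j = (z : ℝ)} = ∅) ∧
      (∀ x ∈ cgList K
          (List.ofFn fun i => fun j => ((L.get i) j : ℝ) + (ns i : ℝ) * (a j : ℝ)),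
        (∑ j, (a j : ℝ) * x j) < (z : ℝ)) ∧
      (∀ x ∈ cgCut
          (cgList K (List.ofFn fun i => fun j => ((L.get i) j : ℝ) + (ns i : ℝ) * (a j : ℝ)))
          (fun j => (a j : ℝ)),
        (∑ j, (a j : ℝ) * x j) ≤ (z : ℝ) - 1) := by
  classical
  set A : Fin n → ℝ := fun j => ((a j : ℝ)) with hA
  have hub : ∀ x ∈ K, CGAux.lin A x ≤ (z : ℝ) := by
    intro x hx
    have : CGAux.lin A x ≤ sSup (CGAux.lin A '' K) :=
      le_csSup ((hK.image (CGAux.lin_cont A)).bddAbove) ⟨x, hx, rfl⟩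
    rwa [show sSup (CGAux.lin A '' K) = (z : ℝ) from hz] at this
  obtain ⟨ns, hns0⟩ := CGAux.main A z L K hK hub hL
  have hns : cgList K (List.ofFn fun i => fun j => ((L.get i) j : ℝ) + (ns i : ℝ) * ((a j : ℝ))) ∩
      {x | ∑ j, (a j : ℝ) * x j = (z : ℝ)} = ∅ := hns0
  refine ⟨ns, ?_, ?_, ?_⟩
  · exact hns
  · intro x hx
    have hxK : x ∈ K := CGAux.cgList_subset _ _ hx
    have hle : CGAux.lin A x ≤ (z : ℝ) := hub x hxK
    have hne' : CGAux.lin A x ≠ (z : ℝ) := by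
      intro heq
      have : x ∈ (cgList K (List.ofFn fun i => fun j =>
          ((L.get i) j : ℝ) + (ns i : ℝ) * (a j : ℝ)) ∩
          {x | ∑ j, (a j : ℝ) * x j = (z : ℝ)}) := ⟨hx, heq⟩
      rw [hns] at this
      exact this
    exact lt_of_le_of_ne hle hne'
  · intro x hx
    set S := cgList K (List.ofFn fun i => fun j =>
      ((L.get i) j : ℝ) + (ns i : ℝ) * (a j : ℝ)) with hS
    have hSc : IsCompact S := CGAux.isCompact_cgList _ hK
    have hxS : x ∈ S := hx.1
    obtain ⟨x₀, hx₀S, hmax⟩ := hSc.exists_isMaxOn ⟨x, hxS⟩ (CGAux.lin_cont A).continuousOn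
    have hx₀lt : CGAux.lin A x₀ < (z : ℝ) := by
      have hxK : x₀ ∈ K := CGAux.cgList_subset _ _ hx₀S
      have hle : CGAux.lin A x₀ ≤ (z : ℝ) := hub x₀ hxK
      have hne' : CGAux.lin A x₀ ≠ (z : ℝ) := by
        intro heq
        have : x₀ ∈ (S ∩ {x | ∑ j, (a j : ℝ) * x j = (z : ℝ)}) := ⟨hx₀S, heq⟩
        rw [hS, hns] at this
        exact this
      exact lt_of_le_of_ne hle hne'
    have hsup : sSup (CGAux.lin A '' S) < (z : ℝ) := by
      have : sSup (CGAux.lin A '' S) ≤ CGAux.lin A x₀ :=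
        csSup_le (Set.Nonempty.image _ ⟨x, hxS⟩) (by rintro y ⟨u, hu, rfl⟩; exact hmax hu)
      linarith
    have hfl : ⌊sSup (CGAux.lin A '' S)⌋ ≤ z - 1 := by
      have := Int.floor_lt.mpr hsup
      omega
    have hxle : CGAux.lin A x ≤ (⌊sSup (CGAux.lin A '' S)⌋ : ℝ) := hx.2
    calc (∑ j, (a j : ℝ) * x j) = CGAux.lin A x := rfl
      _ ≤ (⌊sSup (CGAux.lin A '' S)⌋ : ℝ) := hxle
      _ ≤ ((z - 1 : ℤ) : ℝ) := by exact_mod_cast hfl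
      _ = (z : ℝ) - 1 := by push_cast; ring
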